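/- (Proposition 4.14.) The set of adjointable bounded operators, {T : H →L[K] H | ∃ S : H →L[K] H, ∀ x y : H, ⟪x, T y⟫ = ⟪S x, y⟫}, is a closed subset of the normed space H →L[K] H of continuous linear operators (with the operator norm); i.e. if a sequence of adjointable operators converges in operator norm, its limit is adjointable. -/

import Mathlib

set_option maxHeartbeats 1000000
set_option synthInstance.maxHeartbeats 400000


open Filter

noncomputable section

variable (K : Type*) [NontriviallyNormedField K] [IsUltrametricDist K]
  [CompleteSpace K] [StarRing K] [NormedStarGroup K]

/-- The p-adic coordinate Hilbert space: zero-convergent sequences in `K` with sup norm. -/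
abbrev H := ZeroAtInftyContinuousMap ℕ K

/-- The standard basis vectors of `H K`. -/
def e (n : ℕ) : H K where
  toFun := fun m => if m = n then 1 else 0
  continuous_toFun := continuous_of_discreteTopology
  zero_at_infty' := by
    rw [Filter.cocompact_eq_cofinite, Nat.cofinite_eq_atTop]
    refine Filter.Tendsto.congr' ?_ tendsto_const_nhds
    filter_upwards [Filter.eventually_gt_atTop n] with m hm
    simp [Nat.ne_of_gt hm]

/-- The canonical inner product on `H K`: `⟪x, y⟫ = ∑' i, star (x i) * y i`. -/
def inner' (x y : H K) : K := ∑' i, star (x i) * y i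

/-- A bounded operator is of trace class if its matrix entries vanish along the
cofinite filter of `ℕ × ℕ`. -/
def IsTraceClass (T : H K →L[K] H K) : Prop :=
  Tendsto (fun q : ℕ × ℕ => (T (e K q.2)) q.1) Filter.cofinite (nhds 0)

lemma norm_apply_le' (x : H K) (i : ℕ) : ‖x i‖ ≤ ‖x‖ := by
  rw [← ZeroAtInftyContinuousMap.norm_toBCF_eq_norm]
  exact x.toBCF.norm_coe_le_norm i

lemma summable_inner' (x y : H K) : Summable fun i => star (x i) * y i := by
  apply NonarchimedeanAddGroup.summable_of_tendsto_cofinite_zero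
  rw [Nat.cofinite_eq_atTop]
  have hy : Tendsto (fun i => ‖y i‖) atTop (nhds 0) := by
    have h := zero_at_infty y
    rw [Filter.cocompact_eq_cofinite, Nat.cofinite_eq_atTop] at h
    simpa using h.norm
  rw [tendsto_zero_iff_norm_tendsto_zero]
  refine squeeze_zero (g := fun i => ‖x‖ * ‖y i‖) (fun i => norm_nonneg _) (fun i => ?_) ?_
  · calc ‖star (x i) * y i‖ = ‖x i‖ * ‖y i‖ := by rw [norm_mul, norm_star]
      _ ≤ ‖x‖ * ‖y i‖ := by
        gcongr
        exact norm_apply_le' K x i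
  · simpa using hy.const_mul ‖x‖

lemma norm_inner_le' (x y : H K) : ‖inner' K x y‖ ≤ ‖x‖ * ‖y‖ := by
  unfold inner'
  refine IsUltrametricDist.norm_tsum_le_of_forall_le_of_nonneg
    (mul_nonneg (norm_nonneg _) (norm_nonneg _)) fun i => ?_
  calc ‖star (x i) * y i‖ = ‖x i‖ * ‖y i‖ := by rw [norm_mul, norm_star]
    _ ≤ ‖x‖ * ‖y‖ :=
      mul_le_mul (norm_apply_le' K x i) (norm_apply_le' K y i) (norm_nonneg (y i))
        (norm_nonneg x)

lemma inner_sub_left' (a b y : H K) :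
    inner' K (a - b) y = inner' K a y - inner' K b y := by
  unfold inner'
  rw [← Summable.tsum_sub (summable_inner' K a y) (summable_inner' K b y)]
  exact tsum_congr fun i => by simp [sub_mul]

lemma inner_sub_right' (x a b : H K) :
    inner' K x (a - b) = inner' K x a - inner' K x b := by
  unfold inner'
  rw [← Summable.tsum_sub (summable_inner' K x a) (summable_inner' K x b)]
  exact tsum_congr fun i => by simp [mul_sub]

lemma inner_e_right' (z : H K) (j : ℕ) : inner' K z (e K j) = star (z j) := by
  unfold inner'
  rw [tsum_eq_single j]
  · simp [e]
  · intro b hb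
    simp [e, hb]

lemma norm_e_le_one' (j : ℕ) : ‖e K j‖ ≤ 1 := by
  rw [← ZeroAtInftyContinuousMap.norm_toBCF_eq_norm]
  refine (BoundedContinuousFunction.norm_le zero_le_one).mpr fun i => ?_
  by_cases h : i = j <;> simp [e, h]

lemma norm_adjoint_le' (T S : H K →L[K] H K)
    (h : ∀ x y : H K, inner' K x (T y) = inner' K (S x) y) : ‖S‖ ≤ ‖T‖ := by
  refine ContinuousLinearMap.opNorm_le_bound S (norm_nonneg T) fun x => ?_
  rw [← ZeroAtInftyContinuousMap.norm_toBCF_eq_norm]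
  refine (BoundedContinuousFunction.norm_le
    (mul_nonneg (norm_nonneg T) (norm_nonneg x))).mpr fun j => ?_
  have h1 : ‖(S x) j‖ = ‖inner' K x (T (e K j))‖ := by
    rw [h x (e K j), inner_e_right', norm_star]
  calc ‖(S x).toBCF j‖ = ‖inner' K x (T (e K j))‖ := h1
    _ ≤ ‖x‖ * ‖T (e K j)‖ := norm_inner_le' K _ _
    _ ≤ ‖x‖ * (‖T‖ * ‖e K j‖) := by gcongr; exact T.le_opNorm _
    _ ≤ ‖x‖ * (‖T‖ * 1) :=
        mul_le_mul_of_nonneg_left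
          (mul_le_mul_of_nonneg_left (norm_e_le_one' K j) (norm_nonneg T)) (norm_nonneg x)
    _ = ‖T‖ * ‖x‖ := by ring

/-- The adjointable bounded operators form a closed subset of `B(H)`. -/
theorem stmt5 :
    IsClosed {T : H K →L[K] H K |
      ∃ S : H K →L[K] H K, ∀ x y : H K, inner' K x (T y) = inner' K (S x) y} := by
  refine isClosed_of_closure_subset fun T hT => ?_
  letI P : PseudoMetricSpace (H K →L[K] H K) := inferInstance
  haveI : FirstCountableTopology (H K →L[K] H K) :=
    @UniformSpace.firstCountableTopology _ P.toUniformSpace inferInstance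
  obtain ⟨u, hu, hT⟩ := mem_closure_iff_seq_limit.mp hT
  choose S hS using hu
  have key : ∀ n m : ℕ, dist (S n) (S m) ≤ dist (u n) (u m) := by
    intro n m
    calc dist (S n) (S m) = ‖S n - S m‖ := by exact dist_eq_norm (S n) (S m)
      _ ≤ ‖u n - u m‖ := by
          refine norm_adjoint_le' K (u n - u m) (S n - S m) fun x y => ?_
          simp only [ContinuousLinearMap.sub_apply]
          rw [inner_sub_right', inner_sub_left', hS n, hS m]
      _ = dist (u n) (u m) := by exact (dist_eq_norm (u n) (u m)).symm
  have hCu : CauchySeq u := hT.cauchySeq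
  have hCS : CauchySeq S := by
    refine Metric.cauchySeq_iff.mpr fun ε hε => ?_
    obtain ⟨N, hN⟩ := Metric.cauchySeq_iff.mp hCu ε hε
    exact ⟨N, fun n hn m hm => lt_of_le_of_lt (key n m) (hN n hn m hm)⟩
  obtain ⟨Slim, hSlim⟩ := cauchySeq_tendsto_of_complete hCS
  refine ⟨Slim, fun x y => ?_⟩
  have hTn : Tendsto (fun n => ‖u n - T‖) atTop (nhds 0) := by
    exact (tendsto_iff_dist_tendsto_zero.mp hT).congr fun n => by exact dist_eq_norm (u n) T
  have hSn : Tendsto (fun n => ‖S n - Slim‖) atTop (nhds 0) := by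
    exact (tendsto_iff_dist_tendsto_zero.mp hSlim).congr fun n => by exact dist_eq_norm (S n) Slim
  have h1 : Tendsto (fun n => inner' K x (u n y)) atTop (nhds (inner' K x (T y))) := by
    rw [← tendsto_sub_nhds_zero_iff, tendsto_zero_iff_norm_tendsto_zero]
    refine squeeze_zero (g := fun n => ‖x‖ * (‖u n - T‖ * ‖y‖))
      (fun n => norm_nonneg _) (fun n => ?_) ?_
    · calc ‖inner' K x (u n y) - inner' K x (T y)‖
          = ‖inner' K x (u n y - T y)‖ := by rw [inner_sub_right']
        _ ≤ ‖x‖ * ‖u n y - T y‖ := norm_inner_le' K _ _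
        _ = ‖x‖ * ‖(u n - T) y‖ := by simp
        _ ≤ ‖x‖ * (‖u n - T‖ * ‖y‖) := by gcongr; exact (u n - T).le_opNorm y
    · simpa using (hTn.mul_const ‖y‖).const_mul ‖x‖
  have h2 : Tendsto (fun n => inner' K (S n x) y) atTop (nhds (inner' K (Slim x) y)) := by
    rw [← tendsto_sub_nhds_zero_iff, tendsto_zero_iff_norm_tendsto_zero]
    refine squeeze_zero (g := fun n => ‖S n - Slim‖ * ‖x‖ * ‖y‖)
      (fun n => norm_nonneg _) (fun n => ?_) ?_
    · calc ‖inner' K (S n x) y - inner' K (Slim x) y‖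
          = ‖inner' K (S n x - Slim x) y‖ := by rw [inner_sub_left']
        _ ≤ ‖S n x - Slim x‖ * ‖y‖ := norm_inner_le' K _ _
        _ = ‖(S n - Slim) x‖ * ‖y‖ := by simp
        _ ≤ ‖S n - Slim‖ * ‖x‖ * ‖y‖ := by gcongr; exact (S n - Slim).le_opNorm x
    · simpa [mul_assoc] using (hSn.mul_const ‖x‖).mul_const ‖y‖
  exact tendsto_nhds_unique (h1.congr fun n => hS n x y) h2
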